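/- Theorem 1.1: If (X, 𝓔_v) is a rooted tree and Φ : X → {nonempty compact subsets of ℝ^d} satisfies (A1) and (A2), then the augmented tree (X, 𝓔) with 𝓔 = 𝓔_v ∪ 𝓔_h is Gromov hyperbolic: there exists δ ≥ 0 such that |x ∧ y| ≥ min(|x ∧ z|, |z ∧ y|) − δ for all x, y, z ∈ X. -/

import Mathlib

open Metric Filter

set_option maxHeartbeats 1000000

namespace HypIFS

/-- A rooted tree: a connected, locally finite simple graph with no cycles
and a distinguished root. -/
structure RootedTree (X : Type*) where
  G : SimpleGraph X
  isTree : G.IsTree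
  locFin : ∀ x : X, {y | G.Adj x y}.Finite
  root : X

variable {X : Type*}

/-- the level `|x|` of a vertex: graph distance from the root. -/
noncomputable def lvl (T : RootedTree X) (x : X) : ℕ := T.G.dist T.root x

/-- `p` is the parent `x⁻¹` of `x`. -/
def IsParent (T : RootedTree X) (p x : X) : Prop :=
  T.G.Adj p x ∧ lvl T p + 1 = lvl T x

/-- The graph `(X, 𝓔_v ∪ 𝓔_h)`. -/
def augGraph (T : RootedTree X) (Eh : X → X → Prop) : SimpleGraph X where
  Adj x y := (T.G.Adj x y ∨ Eh x y ∨ Eh y x) ∧ x ≠ y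
  symm := by
    constructor
    rintro x y ⟨h1 | h2 | h3, hne⟩
    · exact ⟨Or.inl h1.symm, hne.symm⟩
    · exact ⟨Or.inr (Or.inr h2), hne.symm⟩
    · exact ⟨Or.inr (Or.inl h3), hne.symm⟩
  loopless := ⟨fun x h => h.2 rfl⟩

/-- The Gromov product `|x ∧ y| = ½(|x| + |y| − d(x,y))` with respect to a root `o`. -/
noncomputable def gprod {V : Type*} (G : SimpleGraph V) (o x y : V) : ℝ :=
  ((G.dist o x : ℝ) + (G.dist o y : ℝ) - (G.dist x y : ℝ)) / 2

/-- Gromov hyperbolicity of a graph with basepoint `o`. -/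
def GromovHyperbolic {V : Type*} (G : SimpleGraph V) (o : V) : Prop :=
  ∃ δ : ℝ, 0 ≤ δ ∧ ∀ x y z : V,
    min (gprod G o x z) (gprod G o z y) - δ ≤ gprod G o x y

/-- The distance `dist(A, B)` between two subsets of a metric space. -/
noncomputable def setDist {E : Type*} [PseudoMetricSpace E] (A B : Set E) : ℝ :=
  sInf (Set.image2 dist A B)

/-- The horizontal edge set `𝓔_h` induced by the set-valued map `Φ`:
`(x,y) ∈ 𝓔_h` iff `|x| = |y|`, `x ≠ y` and `dist(Φ(x), Φ(y)) ≤ κ r^{|x|}`. -/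
def EhPhi {d : ℕ} (T : RootedTree X) (Φ : X → Set (EuclideanSpace ℝ (Fin d)))
    (r κ : ℝ) (x y : X) : Prop :=
  lvl T x = lvl T y ∧ x ≠ y ∧ setDist (Φ x) (Φ y) ≤ κ * r ^ lvl T x

/-! ### Auxiliary lemmas for the proof of Theorem 1.1 -/

section SetDistAux

variable {E : Type*} [PseudoMetricSpace E]

lemma bddBelow_image2_dist (A B : Set E) : BddBelow (Set.image2 dist A B) :=
  ⟨0, by rintro x ⟨a, _, b, _, rfl⟩; exact dist_nonneg⟩

lemma setDist_le_dist {A B : Set E} {a b : E} (ha : a ∈ A) (hb : b ∈ B) :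
    setDist A B ≤ dist a b :=
  csInf_le (bddBelow_image2_dist A B) ⟨a, ha, b, hb, rfl⟩

lemma setDist_comm' (A B : Set E) : setDist A B = setDist B A := by
  unfold setDist
  rw [Set.image2_swap]
  simp_rw [dist_comm]

lemma setDist_le_setDist {A B A' B' : Set E} (hA' : A'.Nonempty) (hB' : B'.Nonempty)
    (hsA : A' ⊆ A) (hsB : B' ⊆ B) : setDist A B ≤ setDist A' B' := by
  apply le_csInf (hA'.image2 hB')
  rintro x ⟨a, ha, b, hb, rfl⟩
  exact setDist_le_dist (hsA ha) (hsB hb)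

lemma setDist_nonpos_of_mem {A B : Set E} {p : E} (hpA : p ∈ A) (hpB : p ∈ B) :
    setDist A B ≤ 0 := by
  simpa using setDist_le_dist hpA hpB

lemma setDist_triangle_diam {A B C : Set E} (hA : A.Nonempty) (hB : B.Nonempty)
    (hC : C.Nonempty) (hBb : Bornology.IsBounded B) :
    setDist A C ≤ setDist A B + diam B + setDist B C := by
  refine le_of_forall_pos_le_add fun ε hε => ?_
  obtain ⟨x, hx, hxlt⟩ := Real.lt_sInf_add_pos (hA.image2 hB) (half_pos hε)
  obtain ⟨y, hy, hylt⟩ := Real.lt_sInf_add_pos (hB.image2 hC) (half_pos hε)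
  obtain ⟨a, ha, b, hb, rfl⟩ := hx
  obtain ⟨b', hb', c, hc, rfl⟩ := hy
  have h1 : setDist A C ≤ dist a c := setDist_le_dist ha hc
  have h2 : dist a c ≤ dist a b + dist b b' + dist b' c := dist_triangle4 a b b' c
  have h3 : dist b b' ≤ diam B := dist_le_diam_of_mem hBb hb hb'
  have e1 : sInf (Set.image2 dist A B) = setDist A B := rfl
  have e2 : sInf (Set.image2 dist B C) = setDist B C := rfl
  rw [e1] at hxlt
  rw [e2] at hylt
  linarith

end SetDistAux

section NumAux

lemma geom_partial_le {t : ℝ} (h0 : 0 ≤ t) (h1 : t < 1) (M : ℕ) :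
    ∑ j ∈ Finset.range M, t ^ j ≤ (1 - t)⁻¹ := by
  have hs := Summable.sum_le_tsum (Finset.range M) (fun i _ => pow_nonneg h0 i)
    (summable_geometric_of_lt_one h0 h1)
  rwa [tsum_geometric_of_lt_one h0 h1] at hs

lemma succ_mul_pow_le {t : ℝ} (h0 : 0 ≤ t) (h1 : t < 1) (j : ℕ) :
    ((j : ℝ) + 1) * t ^ j ≤ (1 - t)⁻¹ := by
  have hcard : (Finset.range (j + 1)).card • (t ^ j) ≤ ∑ a ∈ Finset.range (j + 1), t ^ a :=
    Finset.card_nsmul_le_sum _ _ _ (fun a ha => pow_le_pow_of_le_one h0 h1.le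
      (Nat.lt_succ_iff.mp (Finset.mem_range.mp ha)))
  rw [Finset.card_range, nsmul_eq_mul] at hcard
  have := hcard.trans (geom_partial_le h0 h1 (j + 1))
  push_cast at this
  linarith

lemma log_le_linear {ε z : ℝ} (hε : 0 < ε) (hz : 0 < z) :
    Real.log z ≤ ε * z + Real.log ε⁻¹ := by
  have h := Real.log_le_sub_one_of_pos (mul_pos hε hz)
  rw [Real.log_mul hε.ne' hz.ne'] at h
  rw [Real.log_inv]
  linarith

end NumAux

section SubwalkAux

lemma exists_subwalk {V : Type*} {H : SimpleGraph V} :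
    ∀ {u v : V} (W : H.Walk u v) (i j : ℕ), i ≤ j → j ≤ W.length →
      ∃ W' : H.Walk (W.getVert i) (W.getVert j), W'.length = j - i ∧
        ∀ a, a ≤ j - i → W'.getVert a = W.getVert (i + a) := by
  intro u v W
  induction W with
  | nil =>
    intro i j hij hj
    simp only [SimpleGraph.Walk.length_nil, Nat.le_zero] at hj
    subst hj
    simp only [Nat.le_zero] at hij
    subst hij
    exact ⟨SimpleGraph.Walk.nil, rfl, fun a ha => rfl⟩
  | @cons x m v hadj W ih =>
    intro i j hij hj
    match i, j with
    | 0, 0 =>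
      refine ⟨SimpleGraph.Walk.nil, rfl, fun a ha => ?_⟩
      have h0 : a = 0 := by omega
      subst h0
      rfl
    | 0, (j + 1) =>
      have hj' : j ≤ W.length := by
        simpa [SimpleGraph.Walk.length_cons] using hj
      obtain ⟨W', hW'len, hW'v⟩ := ih 0 j (Nat.zero_le _) hj'
      refine ⟨SimpleGraph.Walk.cons (u := x) (w := W.getVert j) hadj
        (W'.copy (SimpleGraph.Walk.getVert_zero W) rfl), ?_, ?_⟩
      · show (SimpleGraph.Walk.cons (u := x) (w := W.getVert j) hadj
          (W'.copy (SimpleGraph.Walk.getVert_zero W) rfl)).length = j + 1 - 0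
        rw [SimpleGraph.Walk.length_cons, SimpleGraph.Walk.length_copy, hW'len]
        omega
      · intro a ha
        match a with
        | 0 => rfl
        | (a + 1) =>
          have h1 : (SimpleGraph.Walk.cons hadj
              (W'.copy (SimpleGraph.Walk.getVert_zero W) rfl)).getVert (a + 1)
              = W'.getVert a := by
            rw [SimpleGraph.Walk.getVert_cons_succ, SimpleGraph.Walk.getVert_copy]
          have h2 : (SimpleGraph.Walk.cons hadj W).getVert (0 + (a + 1))
              = W.getVert (0 + a) := by
            have e : (0:ℕ) + (a + 1) = (0 + a) + 1 := by omega
            rw [e, SimpleGraph.Walk.getVert_cons_succ]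
          refine h1.trans (Eq.trans ?_ h2.symm)
          exact hW'v a (by omega)
    | (i + 1), (j + 1) =>
      have hj' : j ≤ W.length := by
        simpa [SimpleGraph.Walk.length_cons] using hj
      obtain ⟨W', hW'len, hW'v⟩ := ih i j (by omega) hj'
      refine ⟨W'.copy (by rw [SimpleGraph.Walk.getVert_cons_succ])
        (by rw [SimpleGraph.Walk.getVert_cons_succ]), ?_, ?_⟩
      · simpa using hW'len
      · intro a ha
        rw [SimpleGraph.Walk.getVert_copy]
        have h1 := hW'v a (by omega)
        rw [h1]
        have : i + 1 + a = (i + a) + 1 := by omega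
        rw [this, SimpleGraph.Walk.getVert_cons_succ]

end SubwalkAux

section TreeAux

variable {X : Type*} {T : RootedTree X}

lemma lvl_root : lvl T T.root = 0 := by
  simp [lvl]

lemma exists_tree_path (x : X) :
    ∃ P : T.G.Walk T.root x, P.IsPath ∧ P.length = lvl T x := by
  classical
  obtain ⟨W, hW⟩ := T.isTree.isConnected.exists_walk_length_eq_dist T.root x
  refine ⟨W.bypass, W.bypass_isPath, le_antisymm ?_ ?_⟩
  · calc W.bypass.length ≤ W.length := SimpleGraph.Walk.length_bypass_le W
      _ = lvl T x := hW
  · exact SimpleGraph.dist_le _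

lemma tree_dist_adj_le {u v : X} (h : T.G.Adj u v) : T.G.dist u v ≤ 1 := by
  have := SimpleGraph.dist_le (SimpleGraph.Walk.cons h SimpleGraph.Walk.nil)
  simpa using this

lemma lvl_adj_le {u v : X} (h : T.G.Adj u v) : lvl T v ≤ lvl T u + 1 := by
  have h1 : T.G.dist T.root v ≤ T.G.dist T.root u + T.G.dist u v :=
    T.isTree.isConnected.dist_triangle
  have h2 := tree_dist_adj_le h
  unfold lvl
  omega

lemma lvl_adj {u v : X} (h : T.G.Adj u v) :
    lvl T v = lvl T u + 1 ∨ lvl T u = lvl T v + 1 := by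
  have h1 : lvl T v ≤ lvl T u + 1 := lvl_adj_le h
  have h2 : lvl T u ≤ lvl T v + 1 := lvl_adj_le h.symm
  have hne : lvl T u ≠ lvl T v := by
    classical
    intro heq
    obtain ⟨P, hP, hPl⟩ := exists_tree_path (T := T) u
    have hv : v ∉ P.support := by
      intro hv
      have h4 : T.G.dist T.root v ≤ (P.takeUntil v hv).length := SimpleGraph.dist_le _
      have h5 : (P.takeUntil v hv).length ≤ P.length :=
        SimpleGraph.Walk.length_takeUntil_le P hv
      have h7 : (P.takeUntil v hv).length + (P.dropUntil v hv).length = P.length := by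
        rw [← SimpleGraph.Walk.length_append, P.take_spec hv]
      have hlv : lvl T v = T.G.dist T.root v := rfl
      have h8 : (P.dropUntil v hv).length = 0 := by omega
      have h9 : v = u := SimpleGraph.Walk.eq_of_length_eq_zero h8
      exact h.ne h9.symm
    have hQ : (SimpleGraph.Walk.cons h.symm P.reverse).IsPath := by
      refine hP.reverse.cons ?_
      rwa [SimpleGraph.Walk.support_reverse, List.mem_reverse]
    obtain ⟨R, hR, hRl⟩ := exists_tree_path (T := T) v
    have huniq := T.isTree.IsAcyclic.path_unique
      ⟨R, hR⟩ ⟨(SimpleGraph.Walk.cons h.symm P.reverse).reverse, hQ.reverse⟩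
    have hlen := congrArg (fun p : T.G.Path T.root v => p.val.length) huniq
    simp only [SimpleGraph.Walk.length_reverse, SimpleGraph.Walk.length_cons] at hlen
    omega
  omega

lemma exists_parent {x : X} (hx : 0 < lvl T x) : ∃ p, IsParent T p x := by
  obtain ⟨P, hP, hPl⟩ := exists_tree_path (T := T) x
  have hne : x ≠ T.root := by
    intro h
    rw [h, lvl_root] at hx
    omega
  obtain ⟨y, hadj, W', heq⟩ := SimpleGraph.Walk.exists_eq_cons_of_ne hne P.reverse
  have hlen : W'.length + 1 = lvl T x := by
    have h1 := congrArg SimpleGraph.Walk.length heq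
    rw [SimpleGraph.Walk.length_reverse, SimpleGraph.Walk.length_cons] at h1
    omega
  have hy1 : lvl T y ≤ W'.length := by
    have := SimpleGraph.dist_le W'.reverse
    rwa [SimpleGraph.Walk.length_reverse] at this
  have hy2 : lvl T x ≤ lvl T y + 1 := lvl_adj_le hadj.symm
  exact ⟨y, hadj.symm, by omega⟩

end TreeAux

section AugAux

variable {X : Type*} {d : ℕ} {T : RootedTree X} {Φ : X → Set (EuclideanSpace ℝ (Fin d))}
  {δ₀ r κ : ℝ}

lemma tree_le_aug : T.G ≤ augGraph T (EhPhi T Φ r κ) := by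
  intro a b hab
  exact ⟨Or.inl hab, hab.ne⟩

lemma aug_connected : (augGraph T (EhPhi T Φ r κ)).Connected :=
  T.isTree.isConnected.mono tree_le_aug

lemma aug_adj_lvl {u v : X} (h : (augGraph T (EhPhi T Φ r κ)).Adj u v) :
    lvl T v ≤ lvl T u + 1 ∧ lvl T u ≤ lvl T v + 1 := by
  rcases h.1 with htree | hE | hE
  · exact ⟨lvl_adj_le htree, lvl_adj_le htree.symm⟩
  · rw [hE.1]
    omega
  · rw [hE.1]
    omega

lemma lvl_le_walk {u v : X} (W : (augGraph T (EhPhi T Φ r κ)).Walk u v) :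
    lvl T v ≤ lvl T u + W.length := by
  induction W with
  | nil => simp
  | @cons a m w hadj W ih =>
    have h1 := (aug_adj_lvl hadj).1
    rw [SimpleGraph.Walk.length_cons]
    omega

lemma aug_dist_adj_le {u v : X} (h : (augGraph T (EhPhi T Φ r κ)).Adj u v) :
    (augGraph T (EhPhi T Φ r κ)).dist u v ≤ 1 := by
  have := SimpleGraph.dist_le (SimpleGraph.Walk.cons h SimpleGraph.Walk.nil)
  simpa using this

lemma aug_dist_root (x : X) :
    (augGraph T (EhPhi T Φ r κ)).dist T.root x = lvl T x := by
  apply le_antisymm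
  · obtain ⟨P, _, hPl⟩ := exists_tree_path (T := T) x
    have h1 := SimpleGraph.dist_le (P.mapLe (tree_le_aug (T := T) (Φ := Φ) (r := r) (κ := κ)))
    have h2 : (P.mapLe (tree_le_aug (T := T) (Φ := Φ) (r := r) (κ := κ))).length = P.length := by
      simp [SimpleGraph.Walk.mapLe]
    omega
  · obtain ⟨W, hW⟩ := (aug_connected (T := T) (Φ := Φ) (r := r) (κ := κ)).exists_walk_length_eq_dist T.root x
    have h1 := lvl_le_walk W
    rw [hW, lvl_root] at h1
    omega

lemma lvl_le_lvl_add_dist (x y : X) :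
    lvl T x ≤ lvl T y + (augGraph T (EhPhi T Φ r κ)).dist y x := by
  obtain ⟨W, hW⟩ := (aug_connected (T := T) (Φ := Φ) (r := r) (κ := κ)).exists_walk_length_eq_dist y x
  have h1 := lvl_le_walk W
  omega

lemma aug_dist_le_lvl_add (x y : X) :
    (augGraph T (EhPhi T Φ r κ)).dist x y ≤ lvl T x + lvl T y := by
  have h1 : (augGraph T (EhPhi T Φ r κ)).dist x y ≤
      (augGraph T (EhPhi T Φ r κ)).dist x T.root + (augGraph T (EhPhi T Φ r κ)).dist T.root y :=
    (aug_connected (T := T) (Φ := Φ) (r := r) (κ := κ)).dist_triangle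
  rw [SimpleGraph.dist_comm (u := x) (v := T.root)] at h1
  rw [aug_dist_root, aug_dist_root] at h1
  exact h1

lemma adj_setDist_le (hδ₀ : 1 < δ₀) (hr0 : 0 < r) (hr1 : r < 1) (hκ : 0 < κ)
    (hΦne : ∀ x, (Φ x).Nonempty) (hA1 : ∀ p x, IsParent T p x → Φ x ⊆ Φ p)
    {u v : X} (h : (augGraph T (EhPhi T Φ r κ)).Adj u v) :
    setDist (Φ u) (Φ v) ≤ (κ / r) * r ^ lvl T u := by
  have hpos : (0:ℝ) < (κ / r) * r ^ lvl T u :=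
    mul_pos (div_pos hκ hr0) (pow_pos hr0 _)
  have hkr : κ * r ^ lvl T u ≤ (κ / r) * r ^ lvl T u := by
    have h1 : κ ≤ κ / r := by
      rw [le_div_iff₀ hr0]
      nlinarith
    exact mul_le_mul_of_nonneg_right h1 (pow_nonneg hr0.le _)
  rcases h.1 with htree | hE | hE
  · rcases lvl_adj htree with hl | hl
    · have hsub : Φ v ⊆ Φ u := hA1 u v ⟨htree, hl.symm⟩
      obtain ⟨p, hp⟩ := hΦne v
      exact (setDist_nonpos_of_mem (hsub hp) hp).trans hpos.le
    · have hsub : Φ u ⊆ Φ v := hA1 v u ⟨htree.symm, hl.symm⟩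
      obtain ⟨p, hp⟩ := hΦne u
      exact (setDist_nonpos_of_mem hp (hsub hp)).trans hpos.le
  · exact hE.2.2.trans hkr
  · rw [setDist_comm']
    have h2 := hE.2.2
    rw [hE.1] at h2
    exact h2.trans hkr

lemma walk_setDist_le (hδ₀ : 1 < δ₀) (hr0 : 0 < r) (hr1 : r < 1) (hκ : 0 < κ)
    (hΦc : ∀ x, IsCompact (Φ x)) (hΦne : ∀ x, (Φ x).Nonempty)
    (hA1 : ∀ p x, IsParent T p x → Φ x ⊆ Φ p)
    (hA2 : ∀ x, δ₀⁻¹ * r ^ lvl T x ≤ diam (Φ x) ∧ diam (Φ x) ≤ δ₀ * r ^ lvl T x)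
    {u v : X} (W : (augGraph T (EhPhi T Φ r κ)).Walk u v) :
    setDist (Φ u) (Φ v) ≤ ((κ + δ₀) / r) *
      ∑ i ∈ Finset.range (W.length + 1), r ^ lvl T (W.getVert i) := by
  have hδ0' : (0:ℝ) < δ₀ := lt_trans one_pos hδ₀
  induction W with
  | @nil u =>
    obtain ⟨p, hp⟩ := hΦne u
    have h0 : setDist (Φ u) (Φ u) ≤ 0 := setDist_nonpos_of_mem hp hp
    refine h0.trans ?_
    apply mul_nonneg (le_of_lt (div_pos (by linarith) hr0))
    apply Finset.sum_nonneg
    intro i _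
    exact pow_nonneg hr0.le _
  | @cons a m w hadj W ih =>
    have h1 : setDist (Φ a) (Φ w) ≤ setDist (Φ a) (Φ m) + diam (Φ m) + setDist (Φ m) (Φ w) :=
      setDist_triangle_diam (hΦne a) (hΦne m) (hΦne w) (hΦc m).isBounded
    have h2 : setDist (Φ a) (Φ m) ≤ (κ / r) * r ^ lvl T a :=
      adj_setDist_le hδ₀ hr0 hr1 hκ hΦne hA1 hadj
    have h3 : diam (Φ m) ≤ δ₀ * r ^ lvl T m := (hA2 m).2
    have h5 : δ₀ * r ^ lvl T m ≤ (δ₀ / r) * r ^ lvl T a := by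
      rw [div_mul_eq_mul_div, le_div_iff₀ hr0]
      calc δ₀ * r ^ lvl T m * r = δ₀ * r ^ (lvl T m + 1) := by rw [pow_succ]; try ring
        _ ≤ δ₀ * r ^ lvl T a := by
          apply mul_le_mul_of_nonneg_left _ hδ0'.le
          exact pow_le_pow_of_le_one hr0.le hr1.le (aug_adj_lvl hadj).2
    have hsum : ∑ i ∈ Finset.range (W.length + 1 + 1),
        r ^ lvl T ((SimpleGraph.Walk.cons hadj W).getVert i)
        = (∑ i ∈ Finset.range (W.length + 1), r ^ lvl T (W.getVert i)) + r ^ lvl T a := by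
      rw [Finset.sum_range_succ']
      have e1 : ∑ i ∈ Finset.range (W.length + 1),
          r ^ lvl T ((SimpleGraph.Walk.cons hadj W).getVert (i + 1))
          = ∑ i ∈ Finset.range (W.length + 1), r ^ lvl T (W.getVert i) :=
        Finset.sum_congr rfl (fun i _ => by rw [SimpleGraph.Walk.getVert_cons_succ])
      rw [e1, SimpleGraph.Walk.getVert_zero]
    have hsumnn : (0:ℝ) ≤ ∑ i ∈ Finset.range (W.length + 1), r ^ lvl T (W.getVert i) := by
      apply Finset.sum_nonneg
      intro i _
      positivity
    have expand : ((κ + δ₀) / r) *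
        ((∑ i ∈ Finset.range (W.length + 1), r ^ lvl T (W.getVert i)) + r ^ lvl T a)
        = (κ / r) * r ^ lvl T a + (δ₀ / r) * r ^ lvl T a
          + ((κ + δ₀) / r) * ∑ i ∈ Finset.range (W.length + 1), r ^ lvl T (W.getVert i) := by
      ring
    rw [SimpleGraph.Walk.length_cons, hsum, expand]
    linarith

lemma exists_ancestor (hA1 : ∀ p x, IsParent T p x → Φ x ⊆ Φ p) :
    ∀ (dd k : ℕ) (x : X), lvl T x = k + dd →
      ∃ a, lvl T a = k ∧ Φ x ⊆ Φ a ∧ (augGraph T (EhPhi T Φ r κ)).dist a x ≤ dd := by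
  intro dd
  induction dd with
  | zero =>
    intro k x hx
    refine ⟨x, by omega, subset_rfl, ?_⟩
    rw [SimpleGraph.dist_self]
  | succ n ih =>
    intro k x hx
    obtain ⟨p, hp⟩ := exists_parent (T := T) (x := x) (by omega)
    have hpl : lvl T p = k + n := by
      have := hp.2
      omega
    obtain ⟨a, ha1, ha2, ha3⟩ := ih k p hpl
    refine ⟨a, ha1, Set.Subset.trans (hA1 p x hp) ha2, ?_⟩
    have htri : (augGraph T (EhPhi T Φ r κ)).dist a x ≤
        (augGraph T (EhPhi T Φ r κ)).dist a p + (augGraph T (EhPhi T Φ r κ)).dist p x :=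
      (aug_connected (T := T) (Φ := Φ) (r := r) (κ := κ)).dist_triangle
    have hadj : (augGraph T (EhPhi T Φ r κ)).Adj p x := tree_le_aug hp.1
    have hd1 := aug_dist_adj_le hadj
    omega

lemma dist_le_of_setDist_le (hκ : 0 < κ) (hΦne : ∀ x, (Φ x).Nonempty)
    (hA1 : ∀ p x, IsParent T p x → Φ x ⊆ Φ p)
    {x y : X} (k : ℕ) (hkx : k ≤ lvl T x) (hky : k ≤ lvl T y)
    (hd : setDist (Φ x) (Φ y) ≤ κ * r ^ k) :
    (augGraph T (EhPhi T Φ r κ)).dist x y ≤ (lvl T x - k) + (lvl T y - k) + 1 := by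
  obtain ⟨a, ha1, ha2, ha3⟩ := exists_ancestor (T := T) (Φ := Φ) (r := r) (κ := κ) hA1 (lvl T x - k) k x (by omega)
  obtain ⟨b, hb1, hb2, hb3⟩ := exists_ancestor (T := T) (Φ := Φ) (r := r) (κ := κ) hA1 (lvl T y - k) k y (by omega)
  have hab : (augGraph T (EhPhi T Φ r κ)).dist a b ≤ 1 := by
    by_cases hne : a = b
    · rw [hne, SimpleGraph.dist_self]
      omega
    · have hEdge : (augGraph T (EhPhi T Φ r κ)).Adj a b := by
        refine ⟨Or.inr (Or.inl ⟨by rw [ha1, hb1], hne, ?_⟩), hne⟩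
        rw [ha1]
        exact (setDist_le_setDist (hΦne x) (hΦne y) ha2 hb2).trans hd
      exact aug_dist_adj_le hEdge
  have t1 : (augGraph T (EhPhi T Φ r κ)).dist x y ≤
      (augGraph T (EhPhi T Φ r κ)).dist x a + (augGraph T (EhPhi T Φ r κ)).dist a y :=
    (aug_connected (T := T) (Φ := Φ) (r := r) (κ := κ)).dist_triangle
  have t2 : (augGraph T (EhPhi T Φ r κ)).dist a y ≤
      (augGraph T (EhPhi T Φ r κ)).dist a b + (augGraph T (EhPhi T Φ r κ)).dist b y :=
    (aug_connected (T := T) (Φ := Φ) (r := r) (κ := κ)).dist_triangle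
  have hxa : (augGraph T (EhPhi T Φ r κ)).dist x a = (augGraph T (EhPhi T Φ r κ)).dist a x :=
    SimpleGraph.dist_comm
  omega

end AugAux

section MainAux

variable {X : Type*} {d : ℕ} {T : RootedTree X} {Φ : X → Set (EuclideanSpace ℝ (Fin d))}
  {δ₀ r κ : ℝ}

/-- The key geometric estimate: the set-distance between `Φ x` and `Φ y` is bounded by a
constant multiple of `r` to the Gromov product of `x` and `y`. -/
lemma setDist_le_gprod (hδ₀ : 1 < δ₀) (hr0 : 0 < r) (hr1 : r < 1) (hκ : 0 < κ)
    (hΦc : ∀ x, IsCompact (Φ x)) (hΦne : ∀ x, (Φ x).Nonempty)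
    (hA1 : ∀ p x, IsParent T p x → Φ x ⊆ Φ p)
    (hA2 : ∀ x, δ₀⁻¹ * r ^ lvl T x ≤ diam (Φ x) ∧ diam (Φ x) ≤ δ₀ * r ^ lvl T x) :
    ∃ C : ℝ, 1 ≤ C ∧ ∀ x y : X,
      setDist (Φ x) (Φ y) ≤ C * r ^ (gprod (augGraph T (EhPhi T Φ r κ)) T.root x y) := by
  have hδ0' : (0:ℝ) < δ₀ := lt_trans one_pos hδ₀
  set Cκ := (κ + δ₀) / r with hCκdef
  have hCκpos : 0 < Cκ := div_pos (by linarith) hr0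
  have hCκκ : κ ≤ Cκ := by
    rw [hCκdef, le_div_iff₀ hr0]
    nlinarith
  set lr := -Real.log r with hlrdef
  have hlr : 0 < lr := by
    have := Real.log_neg hr0 hr1
    rw [hlrdef]
    linarith
  set K₀ := (Real.log (Cκ / κ) + Real.log (8 / lr)) / lr + 1 with hK₀def
  set K₁ := (8/3) * max K₀ 0 + 5/3 with hK₁def
  have hK₁nn : 0 ≤ K₁ := by
    have : (0:ℝ) ≤ max K₀ 0 := le_max_right _ _
    rw [hK₁def]
    linarith
  set K₂ := K₁ + 4 with hK₂def
  set ρ := (1 + r) / 2 with hρdef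
  have hρ0 : 0 < ρ := by rw [hρdef]; linarith
  have hρ1 : ρ < 1 := by rw [hρdef]; linarith
  have htr : r < ρ := by rw [hρdef]; linarith
  have ht0 : 0 ≤ r / ρ := div_nonneg hr0.le hρ0.le
  have ht1 : r / ρ < 1 := (div_lt_one hρ0).mpr htr
  set Sg := (1 - r / ρ)⁻¹ * (1 - ρ)⁻¹ with hSgdef
  have hSgpos : 0 < Sg := by
    rw [hSgdef]
    apply mul_pos (inv_pos.mpr (by linarith)) (inv_pos.mpr (by linarith))
  refine ⟨max (Cκ * K₂ * Sg) 1, le_max_right _ _, fun x y => ?_⟩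
  obtain ⟨W, hWlen⟩ :=
    (aug_connected (T := T) (Φ := Φ) (r := r) (κ := κ)).exists_walk_length_eq_dist x y
  -- minimum level along the geodesic
  have hSne : (Finset.range (W.length + 1)).Nonempty := ⟨0, by simp⟩
  set b := (Finset.range (W.length + 1)).inf' hSne (fun i => lvl T (W.getVert i)) with hbdef
  have hble : ∀ i, i ≤ W.length → b ≤ lvl T (W.getVert i) := by
    intro i hi
    exact Finset.inf'_le _ (Finset.mem_range.mpr (by omega))
  obtain ⟨i0, hi0S, hi0⟩ := Finset.exists_mem_eq_inf' hSne (fun i => lvl T (W.getVert i))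
  have hi0m : i0 ≤ W.length := by
    have := Finset.mem_range.mp hi0S
    omega
  -- subwalk estimates
  have hsub : ∀ i j : ℕ, i ≤ j → j ≤ W.length →
      (augGraph T (EhPhi T Φ r κ)).dist (W.getVert i) (W.getVert j) ≤ j - i ∧
      setDist (Φ (W.getVert i)) (Φ (W.getVert j)) ≤ Cκ * (((j - i : ℕ) : ℝ) + 1) * r ^ b := by
    intro i j hij hjm
    obtain ⟨W', hW'len, hW'v⟩ := exists_subwalk W i j hij hjm
    constructor
    · have := SimpleGraph.dist_le W'
      omega
    · have h1 := walk_setDist_le hδ₀ hr0 hr1 hκ hΦc hΦne hA1 hA2 W'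
      have h2 : ∑ a ∈ Finset.range (W'.length + 1), r ^ lvl T (W'.getVert a)
          ≤ (((j - i : ℕ) : ℝ) + 1) * r ^ b := by
        rw [hW'len]
        have h3 : ∀ a ∈ Finset.range ((j - i) + 1), r ^ lvl T (W'.getVert a) ≤ r ^ b := by
          intro a ha
          have haji : a ≤ j - i := by
            have := Finset.mem_range.mp ha
            omega
          rw [hW'v a haji]
          apply pow_le_pow_of_le_one hr0.le hr1.le
          exact hble (i + a) (by omega)
        calc ∑ a ∈ Finset.range ((j - i) + 1), r ^ lvl T (W'.getVert a)
            ≤ ∑ _a ∈ Finset.range ((j - i) + 1), r ^ b := Finset.sum_le_sum h3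
          _ = ((j - i) + 1 : ℕ) * r ^ b := by
              rw [Finset.sum_const, Finset.card_range, nsmul_eq_mul]
          _ = (((j - i : ℕ) : ℝ) + 1) * r ^ b := by push_cast; ring
      calc setDist (Φ (W.getVert i)) (Φ (W.getVert j))
          ≤ Cκ * ∑ a ∈ Finset.range (W'.length + 1), r ^ lvl T (W'.getVert a) := h1
        _ ≤ Cκ * ((((j - i : ℕ) : ℝ) + 1) * r ^ b) :=
            mul_le_mul_of_nonneg_left h2 hCκpos.le
        _ = Cκ * (((j - i : ℕ) : ℝ) + 1) * r ^ b := by ring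
  -- geodesic subsegments
  have hgeo : ∀ i j : ℕ, i ≤ j → j ≤ W.length →
      (j - i : ℕ) ≤ (augGraph T (EhPhi T Φ r κ)).dist (W.getVert i) (W.getVert j) := by
    intro i j hij hjm
    have h1 : (augGraph T (EhPhi T Φ r κ)).dist (W.getVert 0) (W.getVert i) ≤ i :=
      (hsub 0 i (Nat.zero_le _) (le_trans hij hjm)).1
    have h2 : (augGraph T (EhPhi T Φ r κ)).dist (W.getVert j) (W.getVert W.length)
        ≤ W.length - j := (hsub j W.length hjm le_rfl).1
    rw [SimpleGraph.Walk.getVert_zero] at h1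
    rw [SimpleGraph.Walk.getVert_length] at h2
    have t1 : (augGraph T (EhPhi T Φ r κ)).dist x y ≤
        (augGraph T (EhPhi T Φ r κ)).dist x (W.getVert i) +
        (augGraph T (EhPhi T Φ r κ)).dist (W.getVert i) y :=
      (aug_connected (T := T) (Φ := Φ) (r := r) (κ := κ)).dist_triangle
    have t2 : (augGraph T (EhPhi T Φ r κ)).dist (W.getVert i) y ≤
        (augGraph T (EhPhi T Φ r κ)).dist (W.getVert i) (W.getVert j) +
        (augGraph T (EhPhi T Φ r κ)).dist (W.getVert j) y :=
      (aug_connected (T := T) (Φ := Φ) (r := r) (κ := κ)).dist_triangle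
    omega
  -- level bound per index
  have hnle : ∀ i, i ≤ W.length → lvl T (W.getVert i) ≤ lvl T x + i := by
    intro i hi
    have h1 := lvl_le_lvl_add_dist (T := T) (Φ := Φ) (r := r) (κ := κ) (W.getVert i) x
    have h2 : (augGraph T (EhPhi T Φ r κ)).dist x (W.getVert i) ≤ i := by
      have := (hsub 0 i (Nat.zero_le _) hi).1
      rwa [SimpleGraph.Walk.getVert_zero, Nat.sub_zero] at this
    omega
  -- the counting claim
  have hcount : ∀ j i1 i2 : ℕ, i1 ≤ i2 → i2 ≤ W.length →
      lvl T (W.getVert i1) = b + j → lvl T (W.getVert i2) = b + j →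
      ((i2 - i1 : ℕ) : ℝ) ≤ 3 * j + K₁ := by
    intro j i1 i2 h12 h2m hn1 hn2
    have hjnn : (0:ℝ) ≤ (j : ℝ) := Nat.cast_nonneg _
    by_cases hq0 : i2 - i1 = 0
    · rw [hq0]
      push_cast
      linarith
    · set q := i2 - i1 with hqdef
      set Q := Cκ * ((q : ℝ) + 1) / κ with hQdef
      have hq1 : (1:ℝ) ≤ (q:ℝ) + 1 := by
        have : (0:ℝ) ≤ (q:ℝ) := Nat.cast_nonneg _
        linarith
      have hQ1 : 1 ≤ Q := by
        rw [hQdef, le_div_iff₀ hκ]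
        nlinarith
      have hQpos : 0 < Q := lt_of_lt_of_le one_pos hQ1
      set jβ := ⌈Real.log Q / lr⌉₊ with hjβdef
      have hrjβ : (r:ℝ) ^ jβ ≤ Q⁻¹ := by
        have h1 : Real.log Q / lr ≤ (jβ : ℝ) := Nat.le_ceil _
        have h2 : Real.log Q ≤ (jβ : ℝ) * lr := by
          have := mul_le_mul_of_nonneg_right h1 hlr.le
          rwa [div_mul_cancel₀ _ hlr.ne'] at this
        have h3 : Real.log r * (jβ : ℝ) ≤ -Real.log Q := by
          have hlogr : Real.log r = -lr := by rw [hlrdef]; ring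
          rw [hlogr]
          nlinarith
        calc (r:ℝ) ^ jβ = Real.exp (Real.log r * (jβ:ℝ)) := by
              rw [← Real.rpow_natCast r jβ, Real.rpow_def_of_pos hr0]
          _ ≤ Real.exp (-Real.log Q) := Real.exp_le_exp.mpr h3
          _ = Q⁻¹ := by rw [Real.exp_neg, Real.exp_log hQpos]
      have hqd : q ≤ 2 * j + 2 * jβ + 1 := by
        have hql := hgeo i1 i2 h12 h2m
        by_cases hbj : jβ ≤ b
        · have hset := (hsub i1 i2 h12 h2m).2
          have hk1 : b - jβ ≤ lvl T (W.getVert i1) := by omega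
          have hk2 : b - jβ ≤ lvl T (W.getVert i2) := by omega
          have hsd : setDist (Φ (W.getVert i1)) (Φ (W.getVert i2)) ≤ κ * r ^ (b - jβ) := by
            refine hset.trans ?_
            have hbsplit : (r:ℝ) ^ b = r ^ (b - jβ) * r ^ jβ := by
              rw [← pow_add]
              congr 1
              omega
            rw [hbsplit]
            have h3 : Cκ * ((q:ℝ) + 1) * r ^ jβ ≤ κ := by
              have h4 : Cκ * ((q:ℝ) + 1) * r ^ jβ ≤ Cκ * ((q:ℝ) + 1) * Q⁻¹ :=
                mul_le_mul_of_nonneg_left hrjβ (mul_nonneg hCκpos.le (by linarith))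
              have h5 : Cκ * ((q:ℝ) + 1) * Q⁻¹ = κ := by
                rw [hQdef]
                field_simp
              linarith
            calc Cκ * ((q:ℝ) + 1) * (r ^ (b - jβ) * r ^ jβ)
                = (Cκ * ((q:ℝ) + 1) * r ^ jβ) * r ^ (b - jβ) := by ring
              _ ≤ κ * r ^ (b - jβ) :=
                  mul_le_mul_of_nonneg_right h3 (pow_nonneg hr0.le _)
          have hdle := dist_le_of_setDist_le (T := T) hκ hΦne hA1 (b - jβ) hk1 hk2 hsd
          omega
        · have h1 := aug_dist_le_lvl_add (T := T) (Φ := Φ) (r := r) (κ := κ)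
            (W.getVert i1) (W.getVert i2)
          omega
      -- numeric chase
      have hjβnn : 0 ≤ Real.log Q / lr :=
        div_nonneg (Real.log_nonneg hQ1) hlr.le
      have hjβle : (jβ : ℝ) < Real.log Q / lr + 1 := Nat.ceil_lt_add_one hjβnn
      have hlogQ : Real.log Q = Real.log (Cκ / κ) + Real.log ((q:ℝ) + 1) := by
        have hQ' : Q = (Cκ / κ) * ((q:ℝ) + 1) := by rw [hQdef]; ring
        rw [hQ', Real.log_mul (ne_of_gt (div_pos hCκpos hκ)) (by linarith)]
      have hlogq : Real.log ((q:ℝ) + 1) ≤ (lr / 8) * ((q:ℝ) + 1) + Real.log ((lr / 8)⁻¹) :=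
        log_le_linear (by linarith) (by linarith)
      have hinv8 : ((lr / 8)⁻¹ : ℝ) = 8 / lr := by
        rw [inv_div]
      rw [hinv8] at hlogq
      have hjβK₀ : (jβ : ℝ) ≤ K₀ + ((q:ℝ) + 1) / 8 := by
        have h6 : Real.log Q / lr ≤ (Real.log (Cκ / κ) + (lr / 8) * ((q:ℝ) + 1)
            + Real.log (8 / lr)) / lr := by
          apply (div_le_div_iff_of_pos_right hlr).mpr
          rw [hlogQ]
          linarith
        have h7 : (Real.log (Cκ / κ) + (lr / 8) * ((q:ℝ) + 1) + Real.log (8 / lr)) / lr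
            = (Real.log (Cκ / κ) + Real.log (8 / lr)) / lr + ((q:ℝ) + 1) / 8 := by
          field_simp
          ring
        rw [hK₀def]
        linarith
      have hcast : (q:ℝ) ≤ 2 * (j:ℝ) + 2 * (jβ:ℝ) + 1 := by exact_mod_cast hqd
      have hK₀max : K₀ ≤ max K₀ 0 := le_max_left _ _
      clear_value q jβ K₀ K₁
      rw [hK₁def]
      linarith
  -- fiberwise sum bound
  have hfibcard : ∀ j : ℕ,
      (((Finset.range (W.length + 1)).filter
        (fun i => lvl T (W.getVert i) - b = j)).card : ℝ) ≤ 3 * j + K₁ + 1 := by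
    intro j
    set Fj := (Finset.range (W.length + 1)).filter (fun i => lvl T (W.getVert i) - b = j)
      with hFjdef
    rcases Finset.eq_empty_or_nonempty Fj with he | hne
    · rw [he]
      simp only [Finset.card_empty, Nat.cast_zero]
      have hjnn : (0:ℝ) ≤ (j:ℝ) := Nat.cast_nonneg _
      linarith
    · set i1 := Fj.min' hne with hi1def
      set i2 := Fj.max' hne with hi2def
      have h1 : i1 ∈ Fj := Finset.min'_mem _ _
      have h2 : i2 ∈ Fj := Finset.max'_mem _ _
      have hp1 := Finset.mem_filter.mp h1
      have hp2 := Finset.mem_filter.mp h2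
      have h1m : i1 ≤ W.length := by
        have := Finset.mem_range.mp hp1.1
        omega
      have h2m : i2 ≤ W.length := by
        have := Finset.mem_range.mp hp2.1
        omega
      have h12 : i1 ≤ i2 := Finset.min'_le _ _ h2
      have hbn1 : b ≤ lvl T (W.getVert i1) := hble i1 h1m
      have hbn2 : b ≤ lvl T (W.getVert i2) := hble i2 h2m
      have hn1 : lvl T (W.getVert i1) = b + j := by
        have := hp1.2
        omega
      have hn2 : lvl T (W.getVert i2) = b + j := by
        have := hp2.2
        omega
      have hq := hcount j i1 i2 h12 h2m hn1 hn2
      have hsubs : Fj ⊆ Finset.Icc i1 i2 := fun i hi =>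
        Finset.mem_Icc.mpr ⟨Finset.min'_le _ _ hi, Finset.le_max' _ _ hi⟩
      have hcardle : Fj.card ≤ (i2 - i1) + 1 := by
        have := Finset.card_le_card hsubs
        rw [Nat.card_Icc] at this
        omega
      have hc2 : (Fj.card : ℝ) ≤ ((i2 - i1 : ℕ) : ℝ) + 1 := by exact_mod_cast hcardle
      linarith
  -- total sum bound
  have hSig : ∑ i ∈ Finset.range (W.length + 1), (r:ℝ) ^ lvl T (W.getVert i)
      ≤ K₂ * Sg * r ^ b := by
    have hmaps : ∀ i ∈ Finset.range (W.length + 1),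
        lvl T (W.getVert i) - b ∈ Finset.range (lvl T x + W.length + 1) := by
      intro i hi
      have him : i ≤ W.length := by
        have := Finset.mem_range.mp hi
        omega
      have := hnle i him
      exact Finset.mem_range.mpr (by omega)
    have hfib := Finset.sum_fiberwise_of_maps_to hmaps
      (fun i => (r:ℝ) ^ lvl T (W.getVert i))
    rw [← hfib]
    have hstep1 : ∀ j ∈ Finset.range (lvl T x + W.length + 1),
        (∑ i ∈ (Finset.range (W.length + 1)).filter
          (fun i => lvl T (W.getVert i) - b = j), (r:ℝ) ^ lvl T (W.getVert i))
        ≤ K₂ * (((j:ℝ) + 1) * (r / ρ) ^ j * ρ ^ j) * r ^ b := by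
      intro j _
      have hval : ∀ i ∈ (Finset.range (W.length + 1)).filter
          (fun i => lvl T (W.getVert i) - b = j), (r:ℝ) ^ lvl T (W.getVert i) = r ^ (b + j) := by
        intro i hi
        have hmem := Finset.mem_filter.mp hi
        have him : i ≤ W.length := by
          have := Finset.mem_range.mp hmem.1
          omega
        have hb' : b ≤ lvl T (W.getVert i) := hble i him
        have : lvl T (W.getVert i) = b + j := by
          have := hmem.2
          omega
        rw [this]
      rw [Finset.sum_congr rfl hval, Finset.sum_const, nsmul_eq_mul]
      have hcard := hfibcard j
      have hrρj : ((j:ℝ) + 1) * (r / ρ) ^ j * ρ ^ j = ((j:ℝ) + 1) * r ^ j := by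
        rw [mul_assoc, ← mul_pow, div_mul_cancel₀ _ hρ0.ne']
      rw [hrρj]
      have hbound : (3 * (j:ℝ) + K₁ + 1) ≤ K₂ * ((j:ℝ) + 1) := by
        rw [hK₂def]
        have hjnn : (0:ℝ) ≤ (j:ℝ) := Nat.cast_nonneg _
        nlinarith
      have hpow : (0:ℝ) ≤ r ^ (b + j) := pow_nonneg hr0.le _
      calc (((Finset.range (W.length + 1)).filter
            (fun i => lvl T (W.getVert i) - b = j)).card : ℝ) * r ^ (b + j)
          ≤ (3 * (j:ℝ) + K₁ + 1) * r ^ (b + j) :=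
            mul_le_mul_of_nonneg_right hcard hpow
        _ ≤ (K₂ * ((j:ℝ) + 1)) * r ^ (b + j) :=
            mul_le_mul_of_nonneg_right hbound hpow
        _ = K₂ * (((j:ℝ) + 1) * r ^ j) * r ^ b := by
            rw [pow_add]
            ring
    calc ∑ j ∈ Finset.range (lvl T x + W.length + 1),
          (∑ i ∈ (Finset.range (W.length + 1)).filter
            (fun i => lvl T (W.getVert i) - b = j), (r:ℝ) ^ lvl T (W.getVert i))
        ≤ ∑ j ∈ Finset.range (lvl T x + W.length + 1),
            K₂ * (((j:ℝ) + 1) * (r / ρ) ^ j * ρ ^ j) * r ^ b :=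
          Finset.sum_le_sum hstep1
      _ ≤ ∑ j ∈ Finset.range (lvl T x + W.length + 1),
            K₂ * ((1 - r / ρ)⁻¹ * ρ ^ j) * r ^ b := by
          apply Finset.sum_le_sum
          intro j _
          have h1 : ((j:ℝ) + 1) * (r / ρ) ^ j ≤ (1 - r / ρ)⁻¹ := succ_mul_pow_le ht0 ht1 j
          have h2 : (0:ℝ) ≤ ρ ^ j := pow_nonneg hρ0.le _
          have h3 : ((j:ℝ) + 1) * (r / ρ) ^ j * ρ ^ j ≤ (1 - r / ρ)⁻¹ * ρ ^ j :=
            mul_le_mul_of_nonneg_right h1 h2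
          have hK₂nn : (0:ℝ) ≤ K₂ := by rw [hK₂def]; linarith
          have hrb : (0:ℝ) ≤ r ^ b := pow_nonneg hr0.le _
          apply mul_le_mul_of_nonneg_right _ hrb
          exact mul_le_mul_of_nonneg_left h3 hK₂nn
      _ = K₂ * r ^ b * (1 - r / ρ)⁻¹ *
            ∑ j ∈ Finset.range (lvl T x + W.length + 1), ρ ^ j := by
          rw [Finset.mul_sum]
          apply Finset.sum_congr rfl
          intro j _
          ring
      _ ≤ K₂ * r ^ b * (1 - r / ρ)⁻¹ * (1 - ρ)⁻¹ := by
          apply mul_le_mul_of_nonneg_left (geom_partial_le hρ0.le hρ1 _)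
          have hK₂nn : (0:ℝ) ≤ K₂ := by rw [hK₂def]; linarith
          have hrb : (0:ℝ) ≤ r ^ b := pow_nonneg hr0.le _
          have hinv : (0:ℝ) ≤ (1 - r / ρ)⁻¹ := inv_nonneg.mpr (by linarith)
          exact mul_nonneg (mul_nonneg hK₂nn hrb) hinv
      _ = K₂ * Sg * r ^ b := by rw [hSgdef]; ring
  -- the Gromov product is at most b
  have hgp : gprod (augGraph T (EhPhi T Φ r κ)) T.root x y ≤ (b:ℝ) := by
    have h1 : lvl T x ≤ b + i0 := by
      have ha := lvl_le_lvl_add_dist (T := T) (Φ := Φ) (r := r) (κ := κ) x (W.getVert i0)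
      have hb' : (augGraph T (EhPhi T Φ r κ)).dist x (W.getVert i0) ≤ i0 := by
        have := (hsub 0 i0 (Nat.zero_le _) hi0m).1
        rwa [SimpleGraph.Walk.getVert_zero, Nat.sub_zero] at this
      rw [SimpleGraph.dist_comm] at hb'
      omega
    have h2 : lvl T y ≤ b + (W.length - i0) := by
      have ha := lvl_le_lvl_add_dist (T := T) (Φ := Φ) (r := r) (κ := κ) y (W.getVert i0)
      have hb' : (augGraph T (EhPhi T Φ r κ)).dist (W.getVert i0) y ≤ W.length - i0 := by
        have := (hsub i0 W.length hi0m le_rfl).1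
        rwa [SimpleGraph.Walk.getVert_length] at this
      omega
    have h3 : lvl T x + lvl T y ≤ 2 * b + W.length := by omega
    unfold gprod
    rw [aug_dist_root, aug_dist_root, ← hWlen]
    have h4 : (lvl T x : ℝ) + (lvl T y : ℝ) ≤ 2 * (b:ℝ) + (W.length : ℝ) := by
      exact_mod_cast h3
    linarith
  -- conclusion
  have hfinal := walk_setDist_le hδ₀ hr0 hr1 hκ hΦc hΦne hA1 hA2 W
  have h5 : Cκ * ∑ i ∈ Finset.range (W.length + 1), (r:ℝ) ^ lvl T (W.getVert i)
      ≤ Cκ * (K₂ * Sg * r ^ b) := mul_le_mul_of_nonneg_left hSig hCκpos.le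
  have h6 : (r:ℝ) ^ b ≤ r ^ (gprod (augGraph T (EhPhi T Φ r κ)) T.root x y) := by
    rw [← Real.rpow_natCast r b]
    exact Real.rpow_le_rpow_of_exponent_ge hr0 hr1.le hgp
  have h7 : Cκ * K₂ * Sg ≤ max (Cκ * K₂ * Sg) 1 := le_max_left _ _
  have hrgp : (0:ℝ) ≤ r ^ (gprod (augGraph T (EhPhi T Φ r κ)) T.root x y) :=
    Real.rpow_nonneg hr0.le _
  have hK₂nn : (0:ℝ) ≤ K₂ := by rw [hK₂def]; linarith
  calc setDist (Φ x) (Φ y)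
      ≤ Cκ * ∑ i ∈ Finset.range (W.length + 1), (r:ℝ) ^ lvl T (W.getVert i) := hfinal
    _ ≤ Cκ * (K₂ * Sg * r ^ b) := h5
    _ = (Cκ * K₂ * Sg) * r ^ b := by ring
    _ ≤ (Cκ * K₂ * Sg) * r ^ (gprod (augGraph T (EhPhi T Φ r κ)) T.root x y) := by
        apply mul_le_mul_of_nonneg_left h6
        exact mul_nonneg (mul_nonneg hCκpos.le hK₂nn) hSgpos.le
    _ ≤ max (Cκ * K₂ * Sg) 1 * r ^ (gprod (augGraph T (EhPhi T Φ r κ)) T.root x y) :=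
        mul_le_mul_of_nonneg_right h7 hrgp

end MainAux

/-- Theorem 1.1: the augmented tree `(X, 𝓔_v ∪ 𝓔_h)` induced by a set-valued map
`Φ` satisfying (A1) and (A2) is Gromov hyperbolic. -/
theorem augmented_tree_hyperbolic {d : ℕ} (T : RootedTree X)
    (Φ : X → Set (EuclideanSpace ℝ (Fin d))) (δ₀ r κ : ℝ)
    (hδ₀ : 1 < δ₀) (hr0 : 0 < r) (hr1 : r < 1) (hκ : 0 < κ)
    (hΦc : ∀ x, IsCompact (Φ x)) (hΦne : ∀ x, (Φ x).Nonempty)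
    (hA1 : ∀ p x, IsParent T p x → Φ x ⊆ Φ p)
    (hA2 : ∀ x, δ₀⁻¹ * r ^ lvl T x ≤ diam (Φ x) ∧ diam (Φ x) ≤ δ₀ * r ^ lvl T x) :
    GromovHyperbolic (augGraph T (EhPhi T Φ r κ)) T.root := by
  have hδ0' : (0:ℝ) < δ₀ := lt_trans one_pos hδ₀
  obtain ⟨C, hC1, hC⟩ := setDist_le_gprod hδ₀ hr0 hr1 hκ hΦc hΦne hA1 hA2
  set C₆ := max (2 * C + δ₀) κ with hC₆def
  have hC₆pos : 0 < C₆ := lt_of_lt_of_le hκ (le_max_right _ _)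
  have hκC₆ : κ / C₆ ≤ 1 := by
    rw [div_le_one hC₆pos]
    exact le_max_right _ _
  have hκC₆pos : 0 < κ / C₆ := div_pos hκ hC₆pos
  have hlogr : Real.log r < 0 := Real.log_neg hr0 hr1
  set c₇ := Real.log (κ / C₆) / Real.log r with hc₇def
  have hc₇nn : 0 ≤ c₇ :=
    div_nonneg_of_nonpos (Real.log_nonpos hκC₆pos.le hκC₆) hlogr.le
  have hrc₇ : (r:ℝ) ^ c₇ = κ / C₆ := by
    rw [Real.rpow_def_of_pos hr0, hc₇def, mul_comm, div_mul_cancel₀ _ hlogr.ne,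
      Real.exp_log hκC₆pos]
  -- basic Gromov product facts
  have gp_eq : ∀ a b : X, gprod (augGraph T (EhPhi T Φ r κ)) T.root a b =
      ((lvl T a : ℝ) + (lvl T b : ℝ) - ((augGraph T (EhPhi T Φ r κ)).dist a b : ℝ)) / 2 := by
    intro a b
    unfold gprod
    rw [aug_dist_root, aug_dist_root]
  have gp_nonneg : ∀ a b : X, 0 ≤ gprod (augGraph T (EhPhi T Φ r κ)) T.root a b := by
    intro a b
    rw [gp_eq]
    have h := aug_dist_le_lvl_add (T := T) (Φ := Φ) (r := r) (κ := κ) a b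
    have h2 : ((augGraph T (EhPhi T Φ r κ)).dist a b : ℝ) ≤ (lvl T a : ℝ) + (lvl T b : ℝ) := by
      exact_mod_cast h
    linarith
  have gp_le_left : ∀ a b : X,
      gprod (augGraph T (EhPhi T Φ r κ)) T.root a b ≤ (lvl T a : ℝ) := by
    intro a b
    rw [gp_eq]
    have h := lvl_le_lvl_add_dist (T := T) (Φ := Φ) (r := r) (κ := κ) b a
    have h2 : (lvl T b : ℝ) ≤ (lvl T a : ℝ) + ((augGraph T (EhPhi T Φ r κ)).dist a b : ℝ) := by
      exact_mod_cast h
    linarith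
  have gp_le_right : ∀ a b : X,
      gprod (augGraph T (EhPhi T Φ r κ)) T.root a b ≤ (lvl T b : ℝ) := by
    intro a b
    rw [gp_eq]
    have h := lvl_le_lvl_add_dist (T := T) (Φ := Φ) (r := r) (κ := κ) a b
    have h2 : (lvl T a : ℝ) ≤ (lvl T b : ℝ) + ((augGraph T (EhPhi T Φ r κ)).dist b a : ℝ) := by
      exact_mod_cast h
    rw [SimpleGraph.dist_comm (u := b) (v := a)] at h2
    linarith
  refine ⟨c₇ + 2, by linarith, fun x y z => ?_⟩
  set μ := min (gprod (augGraph T (EhPhi T Φ r κ)) T.root x z)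
    (gprod (augGraph T (EhPhi T Φ r κ)) T.root z y) with hμdef
  by_cases hcase : μ - (c₇ + 2) ≤ 0
  · exact le_trans (by linarith) (gp_nonneg x y)
  · push_neg at hcase
    have hμxz : μ ≤ gprod (augGraph T (EhPhi T Φ r κ)) T.root x z := min_le_left _ _
    have hμzy : μ ≤ gprod (augGraph T (EhPhi T Φ r κ)) T.root z y := min_le_right _ _
    have hrpowmono : ∀ s t : ℝ, s ≤ t → (r:ℝ) ^ t ≤ r ^ s := fun s t h =>
      Real.rpow_le_rpow_of_exponent_ge hr0 hr1.le h
    have hrμnn : (0:ℝ) ≤ r ^ μ := Real.rpow_nonneg hr0.le μ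
    have h1 : setDist (Φ x) (Φ z) ≤ C * r ^ μ :=
      (hC x z).trans (mul_le_mul_of_nonneg_left (hrpowmono _ _ hμxz) (by linarith))
    have h2 : setDist (Φ z) (Φ y) ≤ C * r ^ μ :=
      (hC z y).trans (mul_le_mul_of_nonneg_left (hrpowmono _ _ hμzy) (by linarith))
    have hzlvl : μ ≤ (lvl T z : ℝ) := le_trans hμxz (gp_le_right x z)
    have h3 : diam (Φ z) ≤ δ₀ * r ^ μ := by
      refine (hA2 z).2.trans ?_
      have e1 : (r:ℝ) ^ (lvl T z : ℕ) = r ^ ((lvl T z : ℕ) : ℝ) :=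
        (Real.rpow_natCast r _).symm
      rw [e1]
      exact mul_le_mul_of_nonneg_left (hrpowmono _ _ hzlvl) hδ0'.le
    have htri : setDist (Φ x) (Φ y) ≤
        setDist (Φ x) (Φ z) + diam (Φ z) + setDist (Φ z) (Φ y) :=
      setDist_triangle_diam (hΦne x) (hΦne z) (hΦne y) (hΦc z).isBounded
    have h4 : setDist (Φ x) (Φ y) ≤ C₆ * r ^ μ := by
      have h2C : 2 * C + δ₀ ≤ C₆ := le_max_left _ _
      have h2C' : (2 * C + δ₀) * r ^ μ ≤ C₆ * r ^ μ :=
        mul_le_mul_of_nonneg_right h2C hrμnn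
      linarith
    set k := ⌊μ - c₇⌋₊ with hkdef
    have hμc₇ : 0 ≤ μ - c₇ := by linarith
    have hk1 : (k:ℝ) ≤ μ - c₇ := Nat.floor_le hμc₇
    have hk2 : μ - c₇ < (k:ℝ) + 1 := Nat.lt_floor_add_one _
    have hkx : k ≤ lvl T x := by
      have hx1 : μ ≤ (lvl T x : ℝ) := le_trans hμxz (gp_le_left x z)
      have : (k:ℝ) ≤ (lvl T x : ℝ) := by linarith
      exact_mod_cast this
    have hky : k ≤ lvl T y := by
      have hy1 : μ ≤ (lvl T y : ℝ) := le_trans hμzy (gp_le_right z y)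
      have : (k:ℝ) ≤ (lvl T y : ℝ) := by linarith
      exact_mod_cast this
    have hκrk : C₆ * r ^ μ ≤ κ * r ^ k := by
      have e1 : (r:ℝ) ^ (k:ℕ) = r ^ ((k:ℕ) : ℝ) := (Real.rpow_natCast r k).symm
      rw [e1]
      have e2 : (r:ℝ) ^ μ = r ^ (μ - c₇) * r ^ c₇ := by
        rw [← Real.rpow_add hr0]
        congr 1
        ring
      rw [e2, hrc₇]
      have e3 : C₆ * (r ^ (μ - c₇) * (κ / C₆)) = κ * r ^ (μ - c₇) := by
        field_simp
      rw [e3]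
      exact mul_le_mul_of_nonneg_left (hrpowmono _ _ hk1) hκ.le
    have hshort := dist_le_of_setDist_le (T := T) hκ hΦne hA1 k hkx hky (h4.trans hκrk)
    have hd : ((augGraph T (EhPhi T Φ r κ)).dist x y : ℝ) ≤
        ((lvl T x : ℝ) - k) + ((lvl T y : ℝ) - k) + 1 := by
      have hcast : ((augGraph T (EhPhi T Φ r κ)).dist x y : ℝ) ≤
          ((lvl T x - k : ℕ) : ℝ) + ((lvl T y - k : ℕ) : ℝ) + 1 := by
        exact_mod_cast hshort
      rw [Nat.cast_sub hkx, Nat.cast_sub hky] at hcast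
      exact hcast
    rw [gp_eq]
    linarith

end HypIFS
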